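/- Let F be a family of finite simple graphs, all on r vertices, let H be a graph with chromatic number χ(H) = k ≥ 3, and let γ > 0. Then there exists n₀ such that for every n ≥ n₀ and every H-free graph G on n vertices, G has a spanning subgraph G' that is K_k-free and satisfies |P(F,G) − P(F,G')| ≤ γ·n^r. -/

import Mathlib

open Filter Topology

/-- The number of `r`-element subsets of the vertex set of `G` that induce a subgraph
isomorphic to some member of the family `𝓕`. -/
noncomputable def famCount {r : ℕ} {β : Type*} [Fintype β]
    (𝓕 : Set (SimpleGraph (Fin r))) (G : SimpleGraph β) : ℕ :=
  Set.ncard {s : Finset β | s.card = r ∧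
    ∃ F ∈ 𝓕, Nonempty (F ≃g SimpleGraph.induce (↑s : Set β) G)}

/-- `G` is `H`-free: `G` contains no subgraph isomorphic to `H` (not necessarily
induced), i.e. there is no injective graph homomorphism from `H` to `G`. -/
def HFree {γ β : Type*} (H : SimpleGraph γ) (G : SimpleGraph β) : Prop :=
  ¬ ∃ f : γ ↪ β, ∀ a b, H.Adj a b → G.Adj (f a) (f b)

/-- `i_H(𝓕,n)`: the maximum of `p(𝓕,G)` over `H`-free graphs `G` on `n` vertices. -/
noncomputable def iHn {γ : Type*} (H : SimpleGraph γ) {r : ℕ}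
    (𝓕 : Set (SimpleGraph (Fin r))) (n : ℕ) : ℝ :=
  sSup {x : ℝ | ∃ G : SimpleGraph (Fin n), HFree H G ∧
    x = (famCount 𝓕 G : ℝ) / (n.choose r)}

/-- `i_H(𝓕) = lim_{n → ∞} i_H(𝓕,n)`. -/
noncomputable def iH {γ : Type*} (H : SimpleGraph γ) {r : ℕ}
    (𝓕 : Set (SimpleGraph (Fin r))) : ℝ :=
  limUnder atTop (fun n => iHn H 𝓕 n)

/-- The Zykov symmetrization of `F` at the (nonadjacent) pair `x, y`: the neighborhood of
`x` is replaced by that of `y`, so that `x` and `y` become nonadjacent twins. -/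
def zykov {α : Type*} (F : SimpleGraph α) (x y : α) : SimpleGraph α where
  Adj a b := a ≠ b ∧
    ((a = x ∧ F.Adj y b) ∨ (b = x ∧ F.Adj a y) ∨ (a ≠ x ∧ b ≠ x ∧ F.Adj a b))
  symm := by
    constructor
    rintro a b ⟨hab, h⟩
    refine ⟨hab.symm, ?_⟩
    rcases h with ⟨h1, h2⟩ | ⟨h1, h2⟩ | ⟨h1, h2, h3⟩
    · exact Or.inr (Or.inl ⟨h1, h2.symm⟩)
    · exact Or.inl ⟨h1, h2.symm⟩
    · exact Or.inr (Or.inr ⟨h2, h1, h3.symm⟩)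
  loopless := ⟨fun a h => h.1 rfl⟩

/-- A family of graphs (all of the same order) is symmetrizable if it is closed under
Zykov symmetrization, up to isomorphism. -/
def Symmetrizable {r : ℕ} (𝓕 : Set (SimpleGraph (Fin r))) : Prop :=
  ∀ F ∈ 𝓕, ∀ x y : Fin r, x ≠ y → ¬ F.Adj x y →
    ∃ F' ∈ 𝓕, Nonempty (zykov F x y ≃g F')

open Finset Function SimpleGraph

private lemma card_interedges_eq_sum' {α : Type*} [Fintype α] [DecidableEq α]
    (G : SimpleGraph α) [DecidableRel G.Adj] (s t : Finset α) :
    #(G.interedges s t) = ∑ a ∈ s, #(t.filter (G.Adj a)) := by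
  rw [SimpleGraph.interedges, Rel.interedges_eq_biUnion, card_biUnion]
  · simp
  · intro x hx y hy hxy
    simp only [Finset.disjoint_left, Finset.mem_map, Function.Embedding.coeFn_mk]
    rintro a ⟨u, hu, rfl⟩ ⟨v, hv, h⟩
    exact hxy (congrArg Prod.fst h).symm

private lemma cast_edgeDensity' {α : Type*} [Fintype α] [DecidableEq α]
    (G : SimpleGraph α) [DecidableRel G.Adj] (s t : Finset α) :
    (G.edgeDensity s t : ℝ) = (#(G.interedges s t) : ℝ) / (#s * #t) := by
  rw [SimpleGraph.edgeDensity, Rel.edgeDensity]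
  push_cast
  rfl

private lemma key_step {α γ : Type*} [Fintype α] [DecidableEq α] [Fintype γ] [DecidableEq γ]
    {G : SimpleGraph α} [DecidableRel G.Adj] {H : SimpleGraph γ} [DecidableRel H.Adj]
    {k : ℕ} (κ : γ → Fin k) (hκ : ∀ x y, H.Adj x y → κ x ≠ κ y)
    (V : Fin k → Finset α) {d ε : ℝ} (hε : 0 < ε) (hεd : ε < d) (hd1 : d ≤ 1)
    (hpow : ((Fintype.card γ : ℝ) + 2) * ε ≤ (d - ε) ^ (Fintype.card γ))
    (hsize : ∀ i, ((Fintype.card γ : ℝ) + 1) ≤ ε * #(V i))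
    (hunif : ∀ i j, i ≠ j → G.IsUniform ε (V i) (V j))
    (hdens : ∀ i j, i ≠ j → d ≤ (G.edgeDensity (V i) (V j) : ℝ)) :
    ∀ (t : ℕ) (S : Finset γ) (f : γ → α) (C : γ → Finset α),
      #Sᶜ = t →
      (∀ y ∉ S, C y ⊆ V (κ y)) →
      (∀ y ∉ S, (d - ε) ^ #(S ∩ H.neighborFinset y) * #(V (κ y)) - #S ≤ (#(C y) : ℝ)) →
      (∀ y ∉ S, ∀ x ∈ S, H.Adj x y → ∀ a ∈ C y, G.Adj (f x) a) →
      (∀ y ∉ S, ∀ x ∈ S, f x ∉ C y) →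
      (∀ x ∈ S, f x ∈ V (κ x)) →
      Set.InjOn f S →
      (∀ x ∈ S, ∀ y ∈ S, H.Adj x y → G.Adj (f x) (f y)) →
      ∃ g : γ → α, Function.Injective g ∧ ∀ x y, H.Adj x y → G.Adj (g x) (g y) := by
  classical
  have hdε : 0 < d - ε := by linarith
  have hdε1 : d - ε ≤ 1 := by linarith
  set m : ℕ := Fintype.card γ with hm
  have hmnn : (0 : ℝ) ≤ (m : ℝ) := Nat.cast_nonneg m
  have hVpos : ∀ i, 0 < (#(V i) : ℝ) := by
    intro i
    have := hsize i
    nlinarith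
  intro t
  induction t with
  | zero =>
    intro S f C hcard _ _ _ _ _ hinj hadj
    have hS : S = Finset.univ := by
      have : Sᶜ = ∅ := Finset.card_eq_zero.1 hcard
      simpa [Finset.compl_eq_empty_iff] using this
    subst hS
    exact ⟨f, fun a b hab => hinj (by simp) (by simp) hab,
      fun x y hxy => hadj x (by simp) y (by simp) hxy⟩
  | succ t ih =>
    intro S f C hcard hC1 hC2 hC3 hC4 hfV hinj hadj
    obtain ⟨y0, hy0c⟩ : Sᶜ.Nonempty := by rw [← Finset.card_pos, hcard]; omega
    have hy0 : y0 ∉ S := by simpa using hy0c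
    have hSm : (#S : ℝ) ≤ m := by exact_mod_cast (Finset.card_le_univ S).trans_eq Finset.card_univ
    have hSnn : (0 : ℝ) ≤ (#S : ℝ) := Nat.cast_nonneg _
    have hClower : ∀ y ∉ S, ((m : ℝ) + 1) * (ε * #(V (κ y))) + 1 ≤ #(C y) := by
      intro y hy
      have h2 := hC2 y hy
      have he : #(S ∩ H.neighborFinset y) ≤ m := (Finset.card_le_univ _).trans_eq Finset.card_univ
      have hmono : (d - ε) ^ m ≤ (d - ε) ^ #(S ∩ H.neighborFinset y) :=
        pow_le_pow_of_le_one hdε.le hdε1 he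
      have hs := hsize (κ y)
      have hVp := hVpos (κ y)
      nlinarith [hpow]
    have hc1 : ∀ y ∉ S, (#(V (κ y)) : ℝ) * ε ≤ #(C y) := by
      intro y hy
      have := hClower y hy
      have hVp := hVpos (κ y)
      nlinarith
    have hCpos : ∀ y ∉ S, 0 < (#(C y) : ℝ) := by
      intro y hy
      have := hc1 y hy
      have := hVpos (κ y)
      nlinarith
    set i0 : Fin k := κ y0 with hi0
    set B : γ → Finset α := fun y =>
      (V i0).filter (fun a => (#((C y).filter (G.Adj a)) : ℝ) < (d - ε) * #(C y)) with hB
    have hBbound : ∀ y ∉ S, y ≠ y0 → H.Adj y0 y → (#(B y) : ℝ) ≤ ε * #(V i0) := by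
      intro y hy hyne hadjy
      by_contra hcon
      push_neg at hcon
      have hne : i0 ≠ κ y := hκ y0 y hadjy
      have hBsub : B y ⊆ V i0 := Finset.filter_subset _ _
      have hBcard : (#(V i0) : ℝ) * ε ≤ #(B y) := by
        rw [mul_comm]; exact hcon.le
      have huni := hunif i0 (κ y) hne hBsub (hC1 y hy) hBcard (hc1 y hy)
      have hdlow : d - ε < (G.edgeDensity (B y) (C y) : ℝ) := by
        have habs := abs_lt.1 huni
        have := hdens i0 (κ y) hne
        linarith [habs.1]
      have hBpos : (0 : ℝ) < #(B y) := by
        have := hVpos i0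
        nlinarith
      have hBne : (B y).Nonempty := by
        rw [← Finset.card_pos]; exact_mod_cast hBpos
      have hsum : (#(G.interedges (B y) (C y)) : ℝ) < #(B y) * ((d - ε) * #(C y)) := by
        rw [card_interedges_eq_sum']
        push_cast
        calc (∑ a ∈ B y, (#((C y).filter (G.Adj a)) : ℝ))
            < ∑ _a ∈ B y, (d - ε) * #(C y) := by
              apply Finset.sum_lt_sum_of_nonempty hBne
              intro a ha
              exact (Finset.mem_filter.1 ha).2
          _ = #(B y) * ((d - ε) * #(C y)) := by rw [Finset.sum_const, nsmul_eq_mul]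
      have hdhigh : (G.edgeDensity (B y) (C y) : ℝ) < d - ε := by
        rw [cast_edgeDensity']
        rw [div_lt_iff₀ (mul_pos hBpos (hCpos y hy))]
        calc (#(G.interedges (B y) (C y)) : ℝ) < #(B y) * ((d - ε) * #(C y)) := hsum
          _ = (d - ε) * ((#(B y) : ℝ) * #(C y)) := by ring
      linarith
    set idx : Finset γ := (Sᶜ.erase y0).filter (fun y => H.Adj y0 y) with hidx
    set A : Finset α := (C y0) \ idx.biUnion B with hA
    have hidxm : (#idx : ℝ) ≤ m := by
      exact_mod_cast (Finset.card_le_univ idx).trans_eq Finset.card_univ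
    have hVi0 := hVpos i0
    have hBadBound : (#(idx.biUnion B) : ℝ) ≤ (m : ℝ) * (ε * #(V i0)) := by
      calc (#(idx.biUnion B) : ℝ) ≤ ((∑ y ∈ idx, #(B y) : ℕ) : ℝ) := by
            exact_mod_cast Finset.card_biUnion_le
        _ = ∑ y ∈ idx, (#(B y) : ℝ) := by push_cast; rfl
        _ ≤ ∑ _y ∈ idx, ε * #(V i0) := by
            apply Finset.sum_le_sum
            intro y hy
            rw [hidx] at hy
            simp only [Finset.mem_filter, Finset.mem_erase, Finset.mem_compl] at hy
            exact hBbound y hy.1.2 hy.1.1 hy.2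
        _ = #idx * (ε * #(V i0)) := by rw [Finset.sum_const, nsmul_eq_mul]
        _ ≤ (m : ℝ) * (ε * #(V i0)) := by
            apply mul_le_mul_of_nonneg_right hidxm
            positivity
    have hAcard : (1 : ℝ) ≤ #A := by
      have hsplit : #(C y0) ≤ #A + #(idx.biUnion B) := by
        rw [hA]
        calc #(C y0) ≤ #((C y0) \ idx.biUnion B ∪ idx.biUnion B) :=
              Finset.card_le_card (by intro x hx; by_cases hxx : x ∈ idx.biUnion B <;>
                simp [Finset.mem_union, Finset.mem_sdiff, hx, hxx])
          _ ≤ _ := Finset.card_union_le _ _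
      have hsplit' : (#(C y0) : ℝ) ≤ #A + #(idx.biUnion B) := by exact_mod_cast hsplit
      have hlow := hClower y0 hy0
      have hs0 := hsize i0
      rw [← hi0] at hlow
      nlinarith
    obtain ⟨a, ha⟩ : A.Nonempty := by
      rw [← Finset.card_pos]
      have h1 : (1:ℕ) ≤ #A := by exact_mod_cast hAcard
      omega
    have haC : a ∈ C y0 := (Finset.mem_sdiff.1 ha).1
    have haV : a ∈ V i0 := hC1 y0 hy0 haC
    have haGood : ∀ y, y ∉ S → y ≠ y0 → H.Adj y0 y →
        (d - ε) * #(C y) ≤ (#((C y).filter (G.Adj a)) : ℝ) := by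
      intro y hy hyne hadjy
      have hyidx : y ∈ idx := by
        rw [hidx]
        simp only [Finset.mem_filter, Finset.mem_erase, Finset.mem_compl]
        exact ⟨⟨hyne, hy⟩, hadjy⟩
      have hnotB : a ∉ B y := by
        intro hmem
        exact (Finset.mem_sdiff.1 ha).2 (Finset.mem_biUnion.2 ⟨y, hyidx, hmem⟩)
      rw [hB] at hnotB
      simp only [Finset.mem_filter, haV, true_and, not_lt] at hnotB
      exact hnotB
    -- the update
    set f' : γ → α := Function.update f y0 a with hf'
    set S' : Finset γ := insert y0 S with hS'
    set C' : γ → Finset α := fun y =>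
      if H.Adj y0 y then ((C y).filter (G.Adj a)).erase a else (C y).erase a with hC'
    have hSS' : ∀ y, y ∉ S' → y ∉ S ∧ y ≠ y0 := by
      intro y hy
      rw [hS'] at hy
      simp only [Finset.mem_insert, not_or] at hy
      exact ⟨hy.2, hy.1⟩
    have hC'sub : ∀ y, C' y ⊆ C y := by
      intro y x hx
      simp only [hC'] at hx
      by_cases h : H.Adj y0 y
      · rw [if_pos h] at hx
        exact Finset.filter_subset _ _ (Finset.erase_subset _ _ hx)
      · rw [if_neg h] at hx
        exact Finset.erase_subset _ _ hx
    have hScard : #S' = #S + 1 := Finset.card_insert_of_notMem hy0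
    have herase : ∀ (u : Finset α), (#u : ℝ) - 1 ≤ #(u.erase a) := by
      intro u
      by_cases h : a ∈ u
      · rw [Finset.card_erase_of_mem h]
        have : 1 ≤ #u := Finset.card_pos.2 ⟨a, h⟩
        push_cast [Nat.cast_sub this]
        linarith
      · rw [Finset.erase_eq_of_notMem h]; linarith
    have hupd0 : f' y0 = a := by rw [hf']; simp
    have hupd : ∀ z, z ≠ y0 → f' z = f z := by
      intro z hz; rw [hf']; exact Function.update_of_ne hz _ _
    have hzneq : ∀ z, z ∈ S → z ≠ y0 := fun z hz h => hy0 (h ▸ hz)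
    refine ih S' f' C' ?_ ?_ ?_ ?_ ?_ ?_ ?_ ?_
    · rw [hS', Finset.compl_insert, Finset.card_erase_of_mem hy0c, hcard]
      omega
    · intro y hy
      exact (hC'sub y).trans ((hC1 y (hSS' y hy).1))
    · intro y hy
      obtain ⟨hyS, hyne⟩ := hSS' y hy
      have h2 := hC2 y hyS
      by_cases hadjy : H.Adj y0 y
      · have hy0N : y0 ∈ H.neighborFinset y := by
          rw [SimpleGraph.mem_neighborFinset]; exact hadjy.symm
        have hinter : S' ∩ H.neighborFinset y = insert y0 (S ∩ H.neighborFinset y) := by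
          rw [hS', Finset.insert_inter_of_mem hy0N]
        have hcard2 : #(S' ∩ H.neighborFinset y) = #(S ∩ H.neighborFinset y) + 1 := by
          rw [hinter, Finset.card_insert_of_notMem]
          simp only [Finset.mem_inter, not_and]
          intro h; exact absurd h hy0
        have hCy' : (#((C y).filter (G.Adj a)) : ℝ) - 1 ≤ #(C' y) := by
          have : C' y = ((C y).filter (G.Adj a)).erase a := by
            simp only [hC']; rw [if_pos hadjy]
          rw [this]
          exact herase _
        have hgood := haGood y hyS hyne hadjy
        rw [hcard2, hScard]
        push_cast
        have hpowe : (0:ℝ) ≤ (d - ε) ^ #(S ∩ H.neighborFinset y) := pow_nonneg hdε.le _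
        have hVp := hVpos (κ y)
        have h5 : (d - ε) * #S ≤ (#S : ℝ) := mul_le_of_le_one_left hSnn hdε1
        have h6 := mul_le_mul_of_nonneg_left h2 hdε.le
        calc (d - ε) ^ (#(S ∩ H.neighborFinset y) + 1) * #(V (κ y)) - (#S + 1)
            ≤ (d - ε) * ((d - ε) ^ #(S ∩ H.neighborFinset y) * #(V (κ y)) - #S) - 1 := by
              rw [pow_succ]
              ring_nf
              ring_nf at h5
              linarith
          _ ≤ (d - ε) * #(C y) - 1 := by linarith
          _ ≤ (#((C y).filter (G.Adj a)) : ℝ) - 1 := by linarith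
          _ ≤ #(C' y) := hCy'
      · have hy0N : y0 ∉ H.neighborFinset y := by
          rw [SimpleGraph.mem_neighborFinset]
          intro h; exact hadjy h.symm
        have hinter : S' ∩ H.neighborFinset y = S ∩ H.neighborFinset y := by
          rw [hS', Finset.insert_inter_of_notMem hy0N]
        have hCy' : (#(C y) : ℝ) - 1 ≤ #(C' y) := by
          have : C' y = (C y).erase a := by
            simp only [hC']; rw [if_neg hadjy]
          rw [this]
          exact herase _
        rw [hinter, hScard]
        push_cast
        linarith
    · intro y hy x hx hxy a' ha'
      obtain ⟨hyS, hyne⟩ := hSS' y hy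
      rcases Finset.mem_insert.1 hx with h1 | hxS
      · subst h1
        rw [hupd0]
        have ha'' : a' ∈ (C y).filter (G.Adj a) := by
          have h3 : C' y = ((C y).filter (G.Adj a)).erase a := by
            simp only [hC']; rw [if_pos hxy]
          rw [h3] at ha'
          exact Finset.erase_subset _ _ ha'
        exact (Finset.mem_filter.1 ha'').2
      · rw [hupd x (hzneq x hxS)]
        exact hC3 y hyS x hxS hxy a' (hC'sub y ha')
    · intro y hy x hx
      obtain ⟨hyS, hyne⟩ := hSS' y hy
      rcases Finset.mem_insert.1 hx with h1 | hxS
      · subst h1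
        rw [hupd0]
        simp only [hC']
        by_cases h : H.Adj x y
        · rw [if_pos h]; exact Finset.notMem_erase _ _
        · rw [if_neg h]; exact Finset.notMem_erase _ _
      · rw [hupd x (hzneq x hxS)]
        exact fun h => hC4 y hyS x hxS (hC'sub y h)
    · intro x hx
      rcases Finset.mem_insert.1 hx with h1 | hxS
      · subst h1
        rw [hupd0]
        exact haV
      · rw [hupd x (hzneq x hxS)]
        exact hfV x hxS
    · intro x1 hx1 x2 hx2 heq
      simp only [hS', Finset.coe_insert, Set.mem_insert_iff, Finset.mem_coe] at hx1 hx2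
      rcases hx1 with h1 | h1 <;> rcases hx2 with h2 | h2
      · rw [h1, h2]
      · exfalso
        rw [h1, hupd0, hupd x2 (hzneq x2 h2)] at heq
        exact hC4 y0 hy0 x2 h2 (heq ▸ haC)
      · exfalso
        rw [h2, hupd0, hupd x1 (hzneq x1 h1)] at heq
        exact hC4 y0 hy0 x1 h1 (heq.symm ▸ haC)
      · rw [hupd x1 (hzneq x1 h1), hupd x2 (hzneq x2 h2)] at heq
        exact hinj h1 h2 heq
    · intro x hx y hy hxy
      rcases Finset.mem_insert.1 hx with h1 | hxS <;> rcases Finset.mem_insert.1 hy with h2 | hyS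
      · exfalso; rw [h1, h2] at hxy; exact H.irrefl hxy
      · rw [h1, hupd0, hupd y (hzneq y hyS)]
        have := hC3 y0 hy0 y hyS (by rw [h1] at hxy; exact hxy.symm) a haC
        exact this.symm
      · rw [h2, hupd0, hupd x (hzneq x hxS)]
        exact hC3 y0 hy0 x hxS (by rw [h2] at hxy; exact hxy) a haC
      · rw [hupd x (hzneq x hxS), hupd y (hzneq y hyS)]
        exact hadj x hxS y hyS hxy

private lemma key_embedding {α γ : Type*} [Fintype α] [DecidableEq α] [Fintype γ]
    {G : SimpleGraph α} [DecidableRel G.Adj] (H : SimpleGraph γ)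
    {k : ℕ} (κ : γ → Fin k) (hκ : ∀ x y, H.Adj x y → κ x ≠ κ y)
    (V : Fin k → Finset α) {d ε : ℝ} (hε : 0 < ε) (hεd : ε < d) (hd1 : d ≤ 1)
    (hpow : ((Fintype.card γ : ℝ) + 2) * ε ≤ (d - ε) ^ (Fintype.card γ))
    (hsize : ∀ i, ((Fintype.card γ : ℝ) + 1) ≤ ε * #(V i))
    (hunif : ∀ i j, i ≠ j → G.IsUniform ε (V i) (V j))
    (hdens : ∀ i j, i ≠ j → d ≤ (G.edgeDensity (V i) (V j) : ℝ)) :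
    ∃ g : γ → α, Function.Injective g ∧ ∀ x y, H.Adj x y → G.Adj (g x) (g y) := by
  classical
  cases isEmpty_or_nonempty γ with
  | inl h => exact ⟨fun y => (h.elim y), fun a b => (h.elim a), fun x y hxy => (h.elim x)⟩
  | inr h =>
    have hα : Nonempty α := by
      have hs := hsize (κ (Classical.arbitrary γ))
      have hmn : (0:ℝ) ≤ (Fintype.card γ : ℝ) := Nat.cast_nonneg _
      have hVpos : (0:ℝ) < #(V (κ (Classical.arbitrary γ))) := by nlinarith
      have : (V (κ (Classical.arbitrary γ))).Nonempty := by
        rw [← Finset.card_pos]; exact_mod_cast hVpos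
      exact ⟨this.choose⟩
    obtain ⟨a0⟩ := hα
    refine key_step κ hκ V hε hεd hd1 hpow hsize hunif hdens #(∅ : Finset γ)ᶜ ∅
      (fun _ => a0) (fun y => V (κ y)) rfl ?_ ?_ ?_ ?_ ?_ ?_ ?_
    · intro y _; exact subset_rfl
    · intro y _; simp
    · intro y _ x hx; exact absurd hx (Finset.notMem_empty x)
    · intro y _ x hx; exact absurd hx (Finset.notMem_empty x)
    · intro x hx; exact absurd hx (Finset.notMem_empty x)
    · intro x hx; simp at hx
    · intro x hx; exact absurd hx (Finset.notMem_empty x)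

private lemma unreduced_edges_subset' {α : Type*} [Fintype α] [DecidableEq α]
    {G : SimpleGraph α} [DecidableRel G.Adj] {P : Finpartition (Finset.univ : Finset α)}
    {ε₁ δ : ℝ} :
    ((Finset.univ ×ˢ Finset.univ).filter fun (xy : α × α) =>
        G.Adj xy.1 xy.2 ∧ ¬ (G.regularityReduced P ε₁ δ).Adj xy.1 xy.2) ⊆
      (P.nonUniforms G ε₁).biUnion (fun (UV : Finset α × Finset α) => UV.1 ×ˢ UV.2) ∪
        P.parts.biUnion Finset.offDiag ∪
        (P.sparsePairs G δ).biUnion fun (UV : Finset α × Finset α) => G.interedges UV.1 UV.2 := by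
  rintro ⟨x, y⟩
  simp only [Finset.mem_filter, Finset.mem_univ, true_and, SimpleGraph.regularityReduced_adj,
    not_and, not_exists, not_le, Finset.mem_biUnion, Finset.mem_union, exists_prop,
    Finset.mem_product, Prod.exists, Finset.mem_offDiag, and_imp, or_assoc, and_assoc,
    Finpartition.mk_mem_nonUniforms, Finpartition.mk_mem_sparsePairs,
    SimpleGraph.mem_interedges_iff]
  intro h h'
  replace h' := h' h
  obtain ⟨U, hU, hx⟩ := P.exists_mem (Finset.mem_univ x)
  obtain ⟨W, hW, hy⟩ := P.exists_mem (Finset.mem_univ y)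
  obtain rfl | hUW := eq_or_ne U W
  · exact Or.inr (Or.inl ⟨U, hU, hx, hy, G.ne_of_adj h⟩)
  by_cases h₂ : G.IsUniform ε₁ U W
  · exact Or.inr (Or.inr ⟨U, W, hU, hW, hUW, h' _ hU _ hW hx hy hUW h₂, hx, hy, h⟩)
  · exact Or.inl ⟨U, W, hU, hW, hUW, h₂, hx, hy⟩

private lemma reduced_pairs_count {α : Type*} [Fintype α] [DecidableEq α] [Nonempty α]
    {G : SimpleGraph α} [DecidableRel G.Adj] {P : Finpartition (Finset.univ : Finset α)}
    {ε₁ ε : ℝ} (hε₁ : 0 < ε₁) (hε : 0 < ε) (hεle : ε₁ ≤ ε / 8)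
    (hP : P.IsEquipartition) (hPε : P.IsUniform G ε₁) (hparts : 4 / ε ≤ (#P.parts : ℝ)) :
    (#((Finset.univ ×ˢ Finset.univ).filter fun (xy : α × α) =>
        G.Adj xy.1 xy.2 ∧ ¬ (G.regularityReduced P ε₁ (ε/4)).Adj xy.1 xy.2) : ℝ)
      ≤ 2 * ε * (Fintype.card α)^2 := by
  classical
  set A := (P.nonUniforms G ε₁).biUnion (fun (UV : Finset α × Finset α) => UV.1 ×ˢ UV.2)
  set B := P.parts.biUnion Finset.offDiag
  set C := (P.sparsePairs G (ε/4)).biUnion fun (UV : Finset α × Finset α) =>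
    G.interedges UV.1 UV.2
  have hsub := unreduced_edges_subset' (G := G) (P := P) (ε₁ := ε₁) (δ := ε/4)
  have hcard : (#((Finset.univ ×ˢ Finset.univ).filter fun (xy : α × α) =>
        G.Adj xy.1 xy.2 ∧ ¬ (G.regularityReduced P ε₁ (ε/4)).Adj xy.1 xy.2) : ℝ)
      ≤ (#A : ℝ) + #B + #C := by
    have h1 : #((Finset.univ ×ˢ Finset.univ).filter fun (xy : α × α) =>
        G.Adj xy.1 xy.2 ∧ ¬ (G.regularityReduced P ε₁ (ε/4)).Adj xy.1 xy.2) ≤ #(A ∪ B ∪ C) :=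
      Finset.card_le_card hsub
    have h2 : #(A ∪ B ∪ C) ≤ #A + #B + #C :=
      (Finset.card_union_le _ _).trans (by gcongr; exact Finset.card_union_le _ _)
    exact_mod_cast h1.trans h2
  have hA : (#A : ℝ) < 4 * ε₁ * (Fintype.card α)^2 := by
    have := hP.sum_nonUniforms_lt (G := G) Finset.univ_nonempty hε₁ hPε
    simpa [Finset.card_univ] using this
  have hB : (#B : ℝ) ≤ ε / 2 * (Fintype.card α)^2 := by
    have := hP.card_biUnion_offDiag_le (ε := ε) hε hparts
    simpa [Finset.card_univ] using this
  have hC : (#C : ℝ) ≤ 4 * (ε/4) * (Fintype.card α)^2 := by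
    have := hP.card_interedges_sparsePairs_le (G := G) (ε := ε/4) (by positivity)
    simpa [Finset.card_univ] using this
  have hn : (0:ℝ) ≤ ((Fintype.card α : ℝ))^2 := by positivity
  nlinarith

private lemma induce_eq_of_agree {n : ℕ} {G G' : SimpleGraph (Fin n)} {s : Finset (Fin n)}
    (h : ∀ x ∈ s, ∀ y ∈ s, G.Adj x y ↔ G'.Adj x y) :
    SimpleGraph.induce (↑s : Set (Fin n)) G = SimpleGraph.induce (↑s) G' := by
  ext ⟨x, hx⟩ ⟨y, hy⟩
  exact h x (by exact_mod_cast hx) y (by exact_mod_cast hy)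

private lemma card_filter_le_of_iff_diff {β : Type*} [DecidableEq β] (X : Finset β)
    (p q : β → Prop) [DecidablePred p] [DecidablePred q] :
    #(X.filter p) ≤ #(X.filter q) + #(X.filter fun s => ¬ (p s ↔ q s)) := by
  calc #(X.filter p) ≤ #(X.filter q ∪ X.filter fun s => ¬ (p s ↔ q s)) := by
        apply Finset.card_le_card
        intro s hs
        rw [Finset.mem_filter] at hs
        rw [Finset.mem_union, Finset.mem_filter, Finset.mem_filter]
        by_cases hq : q s
        · exact Or.inl ⟨hs.1, hq⟩
        · exact Or.inr ⟨hs.1, fun h => hq (h.1 hs.2)⟩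
    _ ≤ _ := Finset.card_union_le _ _

private lemma abs_card_filter_sub {β : Type*} [DecidableEq β] (X : Finset β)
    (p q : β → Prop) [DecidablePred p] [DecidablePred q] :
    |(#(X.filter p) : ℝ) - #(X.filter q)| ≤ #(X.filter fun s => ¬ (p s ↔ q s)) := by
  have h1 := card_filter_le_of_iff_diff X p q
  have h2 := card_filter_le_of_iff_diff X q p
  have hcongr : (X.filter fun s => ¬ (q s ↔ p s)) = (X.filter fun s => ¬ (p s ↔ q s)) := by
    apply Finset.filter_congr
    intro s _
    constructor <;> (intro hh hiff; exact hh hiff.symm)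
  rw [hcongr] at h2
  rw [abs_sub_le_iff]
  constructor
  · have : (#(X.filter p) : ℝ) ≤ #(X.filter q) + #(X.filter fun s => ¬ (p s ↔ q s)) := by
      exact_mod_cast h1
    linarith
  · have : (#(X.filter q) : ℝ) ≤ #(X.filter p) + #(X.filter fun s => ¬ (p s ↔ q s)) := by
      exact_mod_cast h2
    linarith



/-- Removal-lemma corollary: for every family `𝓕` of graphs on `r` vertices, every graph
`H` with chromatic number `k ≥ 3` and every `γ > 0`, for all sufficiently large `n`,
every `H`-free graph `G` on `n` vertices has a `K_k`-free spanning subgraph `G'` with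
`|P(𝓕,G) - P(𝓕,G')| ≤ γ·n^r`. -/
theorem stmt7 {r k : ℕ} (hk : 3 ≤ k) {γ : Type*} [Fintype γ]
    (H : SimpleGraph γ) (hH : H.chromaticNumber = (k : ℕ∞))
    (𝓕 : Set (SimpleGraph (Fin r))) {c : ℝ} (hc : 0 < c) :
    ∃ n0 : ℕ, ∀ n : ℕ, n0 ≤ n → ∀ G : SimpleGraph (Fin n), HFree H G →
      ∃ G' : SimpleGraph (Fin n), G' ≤ G ∧ G'.CliqueFree k ∧
        |(famCount 𝓕 G : ℝ) - (famCount 𝓕 G' : ℝ)| ≤ c * (n : ℝ) ^ r := by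
  classical
  have hcol : H.Colorable k := SimpleGraph.chromaticNumber_le_iff_colorable.1 (le_of_eq hH)
  obtain ⟨col⟩ := hcol
  set m : ℕ := Fintype.card γ with hm
  set ε : ℝ := min (c/2) 1 with hεdef
  have hε : 0 < ε := lt_min (by linarith) one_pos
  have hε1 : ε ≤ 1 := min_le_right _ _
  have hεc : ε ≤ c/2 := min_le_left _ _
  set ε₁ : ℝ := min (ε/8) ((ε/8)^m / (m+2)) with hε₁def
  have hmp : (0:ℝ) < (m:ℝ) + 2 := by positivity
  have hε₁pos : 0 < ε₁ := lt_min (by positivity) (by positivity)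
  have hε₁le : ε₁ ≤ ε/8 := min_le_left _ _
  set l : ℕ := max ⌈(4:ℝ)/ε⌉₊ 1 with hldef
  set b : ℕ := SzemerediRegularity.bound ε₁ l with hbdef
  have hbl : l ≤ b := SzemerediRegularity.le_bound ε₁ l
  have hl1 : 1 ≤ l := le_max_right _ _
  set M : ℕ := ⌈((m:ℝ)+1)/ε₁⌉₊ + 1 with hMdef
  refine ⟨max (b * M) l, fun n hn G hGfree => ?_⟩
  haveI : DecidableRel G.Adj := fun a b => Classical.dec _
  have hnl : l ≤ n := le_trans (le_max_right _ _) hn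
  have hn1 : 1 ≤ n := le_trans hl1 hnl
  haveI : Nonempty (Fin n) := ⟨⟨0, by omega⟩⟩
  obtain ⟨P, hP₁, hP₂, hP₃, hP₄⟩ := szemeredi_regularity G hε₁pos (by simpa using hnl)
  have hpartspos : 0 < #P.parts := lt_of_lt_of_le hl1 hP₂
  have hparts : 4 / ε ≤ (#P.parts : ℝ) := by
    calc (4:ℝ)/ε ≤ ⌈(4:ℝ)/ε⌉₊ := Nat.le_ceil _
      _ ≤ (l : ℝ) := by exact_mod_cast le_max_left _ _
      _ ≤ (#P.parts : ℝ) := by exact_mod_cast hP₂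
  have hpartsize : ∀ U ∈ P.parts, M ≤ #U := by
    intro U hU
    have h1 : n / #P.parts ≤ #U := by
      have := hP₁.average_le_card_part hU
      simpa using this
    have h2 : n / b ≤ n / #P.parts := Nat.div_le_div_left hP₃ hpartspos
    have h3 : M ≤ n / b := by
      rw [Nat.le_div_iff_mul_le (lt_of_lt_of_le (lt_of_lt_of_le one_pos hl1) hbl)]
      calc M * b = b * M := Nat.mul_comm _ _
        _ ≤ n := le_trans (le_max_left _ _) hn
    omega
  have hsizeR : ∀ U ∈ P.parts, ((m:ℝ)+1) ≤ ε₁ * #U := by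
    intro U hU
    have h1 : ((m:ℝ)+1)/ε₁ ≤ (M:ℝ) := by
      calc ((m:ℝ)+1)/ε₁ ≤ (⌈((m:ℝ)+1)/ε₁⌉₊ : ℝ) := Nat.le_ceil _
        _ ≤ (M:ℝ) := by rw [hMdef]; push_cast; linarith
    have h2 : (M:ℝ) ≤ (#U : ℝ) := by exact_mod_cast hpartsize U hU
    rw [div_le_iff₀ hε₁pos] at h1
    nlinarith
  set G' := G.regularityReduced P ε₁ (ε/4) with hG'def
  have hle : G' ≤ G := SimpleGraph.regularityReduced_le
  have hcf : G'.CliqueFree k := by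
    intro t ht
    have htc : t.card = k := ht.card_eq
    set x : Fin k → Fin n := fun i => ((t.orderIsoOfFin htc) i : Fin n) with hx
    have hxinj : Function.Injective x := fun i j hij => by
      apply (t.orderIsoOfFin htc).injective
      exact Subtype.ext hij
    have hxt : ∀ i, x i ∈ t := fun i => ((t.orderIsoOfFin htc) i).2
    have hadj : ∀ i j, i ≠ j → G'.Adj (x i) (x j) := fun i j hij =>
      ht.isClique (hxt i) (hxt j) (fun h => hij (hxinj h))
    have hex : ∀ i, ∃ U, U ∈ P.parts ∧ x i ∈ U := by
      intro i
      obtain ⟨U, hU, hxU⟩ := P.exists_mem (Finset.mem_univ (x i))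
      exact ⟨U, hU, hxU⟩
    choose W hWmem hWx using hex
    have hWuniq : ∀ i U, U ∈ P.parts → x i ∈ U → U = W i := by
      intro i U hU hxU
      exact P.disjoint.elim hU (hWmem i) (Finset.not_disjoint_iff.2 ⟨x i, hxU, hWx i⟩)
    have hpair : ∀ i j, i ≠ j → W i ≠ W j ∧ G.IsUniform ε₁ (W i) (W j) ∧
        (ε/4:ℝ) ≤ (G.edgeDensity (W i) (W j) : ℝ) := by
      intro i j hij
      obtain ⟨U, hU, Vp, hVp, hxiU, hxjV, hUV, huni, hdensW⟩ := (hadj i j hij).2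
      obtain rfl : U = W i := hWuniq i U hU hxiU
      obtain rfl : Vp = W j := hWuniq j Vp hVp hxjV
      exact ⟨hUV, huni, hdensW⟩
    have hpow' : ((m : ℝ) + 2) * ε₁ ≤ (ε/4 - ε₁) ^ m := by
      have e1 : ε₁ ≤ (ε/8)^m / (m+2) := min_le_right _ _
      have e2 : ((m:ℝ)+2) * ε₁ ≤ (ε/8)^m := by
        rw [le_div_iff₀ hmp] at e1
        linarith [e1]
      have e3 : ((ε:ℝ)/8)^m ≤ (ε/4 - ε₁)^m := by
        apply pow_le_pow_left₀ (by positivity)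
        linarith
      linarith
    obtain ⟨g, ginj, ghom⟩ := key_embedding H (fun v => col v)
      (fun a b hab => col.valid hab) W (d := ε/4) (ε := ε₁) hε₁pos
      (lt_of_le_of_lt hε₁le (by linarith)) (by linarith) hpow'
      (fun i => hsizeR (W i) (hWmem i))
      (fun i j hij => (hpair i j hij).2.1) (fun i j hij => (hpair i j hij).2.2)
    exact hGfree ⟨⟨g, ginj⟩, ghom⟩
  refine ⟨G', hle, hcf, ?_⟩
  -- counting
  have hfam : ∀ (K : SimpleGraph (Fin n)), famCount 𝓕 K =
      #((Finset.univ.powersetCard r).filter fun s : Finset (Fin n) =>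
        ∃ F ∈ 𝓕, Nonempty (F ≃g SimpleGraph.induce (↑s : Set (Fin n)) K)) := by
    intro K
    rw [famCount, ← Set.ncard_coe_finset]
    congr 1
    ext s
    simp only [Finset.coe_filter, Finset.mem_powersetCard, Set.mem_setOf_eq,
      Finset.subset_univ, true_and]
  have habs := abs_card_filter_sub (Finset.univ.powersetCard r)
    (fun s : Finset (Fin n) => ∃ F ∈ 𝓕, Nonempty (F ≃g SimpleGraph.induce (↑s : Set (Fin n)) G))
    (fun s : Finset (Fin n) => ∃ F ∈ 𝓕, Nonempty (F ≃g SimpleGraph.induce (↑s : Set (Fin n)) G'))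
  set bad := (Finset.univ.powersetCard r).filter (fun s : Finset (Fin n) =>
    ¬ ((∃ F ∈ 𝓕, Nonempty (F ≃g SimpleGraph.induce (↑s : Set (Fin n)) G)) ↔
       (∃ F ∈ 𝓕, Nonempty (F ≃g SimpleGraph.induce (↑s : Set (Fin n)) G')))) with hbaddef
  have hbadpair : ∀ s ∈ bad, ∃ pr : Fin n × Fin n,
      pr.1 ∈ s ∧ pr.2 ∈ s ∧ G.Adj pr.1 pr.2 ∧ ¬ G'.Adj pr.1 pr.2 := by
    intro s hs
    rw [hbaddef, Finset.mem_filter] at hs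
    by_contra hcon
    push_neg at hcon
    apply hs.2
    have heq : SimpleGraph.induce (↑s : Set (Fin n)) G = SimpleGraph.induce (↑s) G' := by
      apply induce_eq_of_agree
      intro a ha bb hb
      constructor
      · intro hab; exact hcon (a, bb) ha hb hab
      · intro hab; exact hle hab
    rw [heq]
  have hsr : ∀ s ∈ bad, s.card = r := by
    intro s hs
    rw [hbaddef, Finset.mem_filter, Finset.mem_powersetCard] at hs
    exact hs.1.2
  set badPairs := (Finset.univ ×ˢ Finset.univ).filter
    (fun xy : Fin n × Fin n => G.Adj xy.1 xy.2 ∧ ¬ G'.Adj xy.1 xy.2) with hbp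
  have hbadPairs_count : (#badPairs : ℝ) ≤ 2 * ε * (n:ℝ)^2 := by
    have h := reduced_pairs_count (G := G) (P := P) hε₁pos hε hε₁le hP₁ hP₄ hparts
    rw [Fintype.card_fin] at h
    have heq : badPairs = (Finset.univ ×ˢ Finset.univ).filter
        (fun xy : Fin n × Fin n => G.Adj xy.1 xy.2 ∧
          ¬ (G.regularityReduced P ε₁ (ε/4)).Adj xy.1 xy.2) := by
      rw [hbp]
    rw [heq]
    exact h
  rw [hfam G, hfam G']
  refine le_trans habs ?_
  rcases Nat.lt_or_ge r 2 with hr | hr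
  · -- r ≤ 1 : bad is empty
    have hempty : bad = ∅ := by
      rw [Finset.eq_empty_iff_forall_notMem]
      intro s hs
      obtain ⟨pr, h1, h2, h3, _⟩ := hbadpair s hs
      have hne : pr.1 ≠ pr.2 := h3.ne
      have hsub : ({pr.1, pr.2} : Finset (Fin n)) ⊆ s := by
        intro z hz
        rcases Finset.mem_insert.1 hz with rfl | hz
        · exact h1
        · rw [Finset.mem_singleton.1 hz]; exact h2
      have h4 : 2 ≤ s.card := by
        calc 2 = #({pr.1, pr.2} : Finset (Fin n)) := (Finset.card_pair hne).symm
          _ ≤ #s := Finset.card_le_card hsub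
      rw [hsr s hs] at h4
      omega
    rw [hempty]
    simp only [Finset.card_empty, Nat.cast_zero]
    positivity
  · -- r ≥ 2 : injection into badPairs × (r-2)-subsets
    have hinj_count : #bad ≤ #badPairs * (n.choose (r-2)) := by
      have hcard2 : #(badPairs ×ˢ ((Finset.univ : Finset (Fin n)).powersetCard (r-2))) =
          #badPairs * (n.choose (r-2)) := by
        rw [Finset.card_product, Finset.card_powersetCard, Finset.card_univ, Fintype.card_fin]
      rw [← hcard2]
      set Φ : Finset (Fin n) → (Fin n × Fin n) × Finset (Fin n) := fun s =>
        if h : ∃ pr : Fin n × Fin n,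
            pr.1 ∈ s ∧ pr.2 ∈ s ∧ G.Adj pr.1 pr.2 ∧ ¬ G'.Adj pr.1 pr.2
        then (h.choose, s \ {h.choose.1, h.choose.2})
        else ((⟨0, by omega⟩, ⟨0, by omega⟩), ∅) with hΦ
      have hsubpair : ∀ (s : Finset (Fin n)) (h : ∃ pr : Fin n × Fin n,
            pr.1 ∈ s ∧ pr.2 ∈ s ∧ G.Adj pr.1 pr.2 ∧ ¬ G'.Adj pr.1 pr.2),
            ({h.choose.1, h.choose.2} : Finset (Fin n)) ⊆ s := by
        intro s h z hz
        rcases Finset.mem_insert.1 hz with rfl | hz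
        · exact h.choose_spec.1
        · rw [Finset.mem_singleton.1 hz]; exact h.choose_spec.2.1
      apply Finset.card_le_card_of_injOn Φ
      · intro s hs
        have hex := hbadpair s hs
        simp only [hΦ, dif_pos hex]
        rw [Finset.mem_coe, Finset.mem_product]
        have hspec := hex.choose_spec
        constructor
        · rw [hbp, Finset.mem_filter]
          exact ⟨Finset.mem_product.2 ⟨Finset.mem_univ _, Finset.mem_univ _⟩,
            hspec.2.2.1, hspec.2.2.2⟩
        · rw [Finset.mem_powersetCard]
          refine ⟨Finset.subset_univ _, ?_⟩
          have hne : hex.choose.1 ≠ hex.choose.2 := hspec.2.2.1.ne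
          rw [Finset.card_sdiff_of_subset (hsubpair s hex), Finset.card_pair hne, hsr s hs]
      · intro s1 hs1 s2 hs2 heq
        have hex1 := hbadpair s1 hs1
        have hex2 := hbadpair s2 hs2
        simp only [hΦ, dif_pos hex1, dif_pos hex2, Prod.mk.injEq] at heq
        obtain ⟨hpr, hsd⟩ := heq
        have e1 : s1 = (s1 \ {hex1.choose.1, hex1.choose.2}) ∪ {hex1.choose.1, hex1.choose.2} :=
          (Finset.sdiff_union_of_subset (hsubpair s1 hex1)).symm
        have e2 : s2 = (s2 \ {hex2.choose.1, hex2.choose.2}) ∪ {hex2.choose.1, hex2.choose.2} :=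
          (Finset.sdiff_union_of_subset (hsubpair s2 hex2)).symm
        rw [e1, e2, hsd, hpr]
    have h1 : (#bad : ℝ) ≤ (#badPairs : ℝ) * ((n.choose (r-2)) : ℝ) := by exact_mod_cast hinj_count
    have h2 : ((n.choose (r-2)):ℝ) ≤ (n:ℝ)^(r-2) := by exact_mod_cast Nat.choose_le_pow n (r-2)
    have hnn : (0:ℝ) ≤ (n:ℝ) := Nat.cast_nonneg _
    have hpow2 : (n:ℝ)^2 * (n:ℝ)^(r-2) = (n:ℝ)^r := by
      rw [← pow_add]; congr 1; omega
    have hchoosenn : (0:ℝ) ≤ ((n.choose (r-2)):ℝ) := Nat.cast_nonneg _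
    have hbadnn : (0:ℝ) ≤ (#badPairs : ℝ) := Nat.cast_nonneg _
    calc ((#bad : ℕ) : ℝ) ≤ (#badPairs : ℝ) * ((n.choose (r-2)) : ℝ) := h1
      _ ≤ (2*ε*(n:ℝ)^2) * (n:ℝ)^(r-2) := by
          apply mul_le_mul hbadPairs_count h2 hchoosenn
          positivity
      _ = 2*ε*(n:ℝ)^r := by rw [mul_assoc, hpow2]
      _ ≤ c * (n:ℝ)^r := by
          have hp : (0:ℝ) ≤ (n:ℝ)^r := by positivity
          nlinarith
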